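/- Let n ≥ 1 and 1 ≤ k' ≤ k ≤ n, and let Φ(k,k') be the sum of all monomials of degree k in x_1,...,x_{n-k'+1}. Then in the quotient ring Z[x_1,...,x_n]/⟨h_1,...,h_n⟩, where h_i are the complete homogeneous symmetric polynomials in n variables, the image of Φ(k,k') is zero. -/

import Mathlib

/-- Sum of all monomials of degree `a` in the first `b` variables `x_1, …, x_b`
of `R[x_1, …, x_n]`. -/
noncomputable def Hp (R : Type*) [CommRing R] (n a b : ℕ) : MvPolynomial (Fin n) R :=
  ∑ m ∈ (Finset.univ.filter fun i : Fin n => (i : ℕ) < b).sym a,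
    ((m : Multiset (Fin n)).map MvPolynomial.X).prod

/-- `Φ(k, k')`: the sum of all monomials of degree `k` in the variables
`x_1, …, x_{n-k'+1}`. In particular `h_k = Φ(k, 1)`. -/
noncomputable def Phi (R : Type*) [CommRing R] (n k k' : ℕ) : MvPolynomial (Fin n) R :=
  Hp R n k (n - k' + 1)


open MvPolynomial Finset

lemma key {R : Type*} [CommRing R] {α : Type*} [DecidableEq α] (a : α) (s : Finset α)
    (ha : a ∉ s) (k : ℕ) :
    ∑ m ∈ (insert a s).sym (k+1), ((m : Multiset α).map (X : α → MvPolynomial α R)).prod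
      = (∑ m ∈ s.sym (k+1), ((m : Multiset α).map X).prod)
        + X a * ∑ m ∈ (insert a s).sym k, ((m : Multiset α).map X).prod := by
  rw [← Finset.sum_filter_add_sum_filter_not ((insert a s).sym (k+1)) (fun m => a ∈ m), add_comm]
  congr 1
  · apply Finset.sum_congr
    · ext m
      simp only [mem_filter, mem_sym_iff, mem_insert]
      constructor
      · rintro ⟨h1, h2⟩ b hb
        rcases h1 b hb with rfl | h
        · exact absurd hb h2
        · exact h
      · intro h
        exact ⟨fun b hb => Or.inr (h b hb), fun hm => ha (h a hm)⟩
    · intros; rfl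
  · rw [Finset.mul_sum]
    refine Finset.sum_bij' (fun m hm => m.erase a (Finset.mem_filter.mp hm).2)
      (fun m _ => a ::ₛ m) ?_ ?_ ?_ ?_ ?_
    · intro m hm
      simp only [mem_filter, mem_sym_iff] at hm ⊢
      intro b hb
      apply hm.1 b
      apply Sym.mem_coe.mp
      apply Multiset.mem_of_mem_erase (b := a)
      rw [← Sym.coe_erase]
      exact Sym.mem_coe.mpr hb
      exact hm.2
    · intro m hm
      simp only [mem_filter, mem_sym_iff] at hm ⊢
      refine ⟨fun b hb => ?_, Sym.mem_cons_self a m⟩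
      rcases Sym.mem_cons.mp hb with h | h
      · rw [h]; exact Finset.mem_insert_self a s
      · exact hm b h
    · intro m hm
      exact Sym.cons_erase _
    · intro m hm
      exact Sym.erase_cons_head m a
    · intro m hm
      conv_lhs => rw [← Sym.cons_erase (Finset.mem_filter.mp hm).2]
      rw [Sym.coe_cons, Multiset.map_cons, Multiset.prod_cons]

lemma Hp_rec (R : Type*) [CommRing R] (n k b : ℕ) (hb : b < n) :
    Hp R n (k+1) b = Hp R n (k+1) (b+1) - X (⟨b, hb⟩ : Fin n) * Hp R n k (b+1) := by
  have hset : (Finset.univ.filter fun i : Fin n => (i : ℕ) < b + 1)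
      = insert (⟨b, hb⟩ : Fin n) (Finset.univ.filter fun i : Fin n => (i : ℕ) < b) := by
    ext i
    simp only [Finset.mem_filter, Finset.mem_insert, Finset.mem_univ, true_and, Fin.ext_iff]
    omega
  have hnot : (⟨b, hb⟩ : Fin n) ∉ (Finset.univ.filter fun i : Fin n => (i : ℕ) < b) := by simp
  unfold Hp
  rw [hset, key _ _ hnot]
  ring

lemma main (n : ℕ) :
    ∀ j k, j + 1 ≤ k → k ≤ n →
      Phi ℤ n k (j+1) ∈
        Ideal.span { p : MvPolynomial (Fin n) ℤ | ∃ l, 1 ≤ l ∧ l ≤ n ∧ p = Phi ℤ n l 1 } := by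
  intro j
  induction j with
  | zero => intro k h1 h2; exact Ideal.subset_span ⟨k, h1, h2, rfl⟩
  | succ j ih =>
    intro k h1 h2
    obtain ⟨m, rfl⟩ : ∃ m, k = m + 1 := ⟨k - 1, by omega⟩
    have hb : n - (j + 2) + 1 < n := by omega
    have hb1 : n - (j + 2) + 1 + 1 = n - (j + 1) + 1 := by omega
    have heq : Phi ℤ n (m+1) (j+2) = Phi ℤ n (m+1) (j+1)
        - X (⟨n - (j+2) + 1, hb⟩ : Fin n) * Phi ℤ n m (j+1) := by
      unfold Phi
      rw [Hp_rec ℤ n m _ hb, hb1]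
    rw [show j + 1 + 1 = j + 2 from rfl, heq]
    exact sub_mem (ih (m+1) (by omega) h2) (Ideal.mul_mem_left _ _ (ih m (by omega) (by omega)))


theorem stmt5 (n k k' : ℕ) (hn : 1 ≤ n) (hk' : 1 ≤ k') (hk'k : k' ≤ k) (hk : k ≤ n) :
    Ideal.Quotient.mk
        (Ideal.span { p : MvPolynomial (Fin n) ℤ | ∃ l, 1 ≤ l ∧ l ≤ n ∧ p = Phi ℤ n l 1 })
        (Phi ℤ n k k') = 0 := by
  rw [Ideal.Quotient.eq_zero_iff_mem]
  obtain ⟨j, rfl⟩ : ∃ j, k' = j + 1 := ⟨k' - 1, by omega⟩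
  exact main n j k (by omega) hk
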